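/- Let D be a chord diagram containing a strong RII pair α = {i, j+1}, β = {i+1, j} (where i, i+1, j, j+1 are distinct points in this cyclic order), let D' be obtained from D by deleting α and β, and let k be the number of chords of D crossing α. Then H(D) ≡ H(D') + k (mod 2); in particular, if D is evenly interlaced then H(D) ≡ H(D') (mod 2). (This is the paper's claim that one strong RII move changes the H-chord count by an even number.) -/

import Mathlib

/-- A chord diagram on `2 * n` points: a fixed-point-free involution of `ZMod (2 * n)`.
Its two-element orbits are called chords; the points lie on a circle in their
natural cyclic order. -/
structure ChordDiagram (n : ℕ) where
  inv : ZMod (2 * n) → ZMod (2 * n)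
  involutive : Function.Involutive inv
  fixedPointFree : ∀ x, inv x ≠ x

/-- A chord: an unordered pair of points of the circle `ZMod m`. -/
abbrev Chord (m : ℕ) := Sym2 (ZMod m)

/-- `x` lies in the open cyclic arc running counterclockwise from `a` to `b`. -/
def InArc {m : ℕ} (a b x : ZMod m) : Prop :=
  0 < (x - a).val ∧ (x - a).val < (b - a).val

/-- Two chords cross: exactly one endpoint of the second lies in the open cyclic arc
bounded by the first. -/
def Chord.Crosses {m : ℕ} (e f : Chord m) : Prop :=
  ∃ a b c d : ZMod m, e = s(a, b) ∧ f = s(c, d) ∧ Xor' (InArc a b c) (InArc a b d)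

/-- The set of chords of a chord diagram. -/
def ChordDiagram.chords {n : ℕ} (D : ChordDiagram n) : Set (Chord (2 * n)) :=
  {e | ∃ x, e = s(x, D.inv x)}

/-- `P` is an (unordered) pair of crossing chords of `D`. -/
def ChordDiagram.IsCrossingPair {n : ℕ} (D : ChordDiagram n)
    (P : Finset (Chord (2 * n))) : Prop :=
  P.card = 2 ∧ (∀ e ∈ P, e ∈ D.chords) ∧
    ∀ e ∈ P, ∀ f ∈ P, e ≠ f → Chord.Crosses e f

/-- `P` is an (unordered) triple of pairwise crossing chords of `D`. -/
def ChordDiagram.IsTripleChord {n : ℕ} (D : ChordDiagram n)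
    (P : Finset (Chord (2 * n))) : Prop :=
  P.card = 3 ∧ (∀ e ∈ P, e ∈ D.chords) ∧
    ∀ e ∈ P, ∀ f ∈ P, e ≠ f → Chord.Crosses e f

/-- `P` is an H-triple of `D`: a triple `{a, b, c}` of chords of `D` such that `c`
crosses both `a` and `b` while `a` and `b` do not cross. -/
def ChordDiagram.IsHTriple {n : ℕ} (D : ChordDiagram n)
    (P : Finset (Chord (2 * n))) : Prop :=
  P.card = 3 ∧ (∀ e ∈ P, e ∈ D.chords) ∧
    ∃ c ∈ P, (∀ e ∈ P, e ≠ c → Chord.Crosses c e) ∧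
      ∀ a ∈ P, ∀ b ∈ P, a ≠ c → b ≠ c → a ≠ b → ¬ Chord.Crosses a b

/-- `X D`: the number of unordered pairs of chords of `D` that cross. -/
noncomputable def ChordDiagram.X {n : ℕ} (D : ChordDiagram n) : ℕ :=
  Set.ncard {P | D.IsCrossingPair P}

/-- `T D`: the number of unordered triples of chords of `D` that pairwise cross. -/
noncomputable def ChordDiagram.T {n : ℕ} (D : ChordDiagram n) : ℕ :=
  Set.ncard {P | D.IsTripleChord P}

/-- `H D`: the number of H-triples of `D`. -/
noncomputable def ChordDiagram.H {n : ℕ} (D : ChordDiagram n) : ℕ :=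
  Set.ncard {P | D.IsHTriple P}

/-- `D'` is obtained from `D` by deleting the set `S` of chords: deletion removes the
chords of `S` together with their endpoints and reindexes the remaining points
preserving their cyclic order; in particular it induces a bijection between the
remaining chords of `D` and the chords of `D'` preserving all crossing relations. -/
def ChordDiagram.DeletionOf {n n' : ℕ} (D : ChordDiagram n) (S : Set (Chord (2 * n)))
    (D' : ChordDiagram n') : Prop :=
  ∃ φ : {e : Chord (2 * n) // e ∈ D.chords ∧ e ∉ S} ≃
      {e : Chord (2 * n') // e ∈ D'.chords},
    ∀ e f, Chord.Crosses e.1 f.1 ↔ Chord.Crosses (φ e).1 (φ f).1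

/-- Four points occurring in this (strict counterclockwise) cyclic order;
in particular they are pairwise distinct. -/
def CyclicOrd4 {m : ℕ} (a b c d : ZMod m) : Prop :=
  0 < (b - a).val ∧ (b - a).val < (c - a).val ∧ (c - a).val < (d - a).val

/-- Six points occurring in this (strict counterclockwise) cyclic order;
in particular they are pairwise distinct. -/
def CyclicOrd6 {m : ℕ} (a b c d e f : ZMod m) : Prop :=
  0 < (b - a).val ∧ (b - a).val < (c - a).val ∧ (c - a).val < (d - a).val ∧
    (d - a).val < (e - a).val ∧ (e - a).val < (f - a).val

/-- `D` is evenly interlaced: every chord of `D` crosses an even number of chords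
of `D` (true for the Gauss diagram of every knot projection). -/
def ChordDiagram.EvenlyInterlaced {n : ℕ} (D : ChordDiagram n) : Prop :=
  ∀ e ∈ D.chords, Even (Set.ncard {f | f ∈ D.chords ∧ Chord.Crosses e f})

/-- Exactly two of the three propositions hold. -/
def ExactlyTwo (A B C : Prop) : Prop :=
  (A ∧ B ∧ ¬ C) ∨ (A ∧ ¬ B ∧ C) ∨ (¬ A ∧ B ∧ C)

/-- A strong RIII move: the three pairwise crossing chords `{p, q+1}`, `{q, r+1}`,
`{r, p+1}` (where `p, p+1, q, q+1, r, r+1` occur in this cyclic order) are replaced by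
the three chords `{p+1, q}`, `{q+1, r}`, `{r+1, p}`, all other chords being unchanged. -/
def ChordDiagram.StrongRIII {n : ℕ} (D D' : ChordDiagram n) : Prop :=
  ∃ p q r : ZMod (2 * n), CyclicOrd6 p (p + 1) q (q + 1) r (r + 1) ∧
    s(p, q + 1) ∈ D.chords ∧ s(q, r + 1) ∈ D.chords ∧ s(r, p + 1) ∈ D.chords ∧
    D'.chords = (D.chords \ {s(p, q + 1), s(q, r + 1), s(r, p + 1)}) ∪
      {s(p + 1, q), s(q + 1, r), s(r + 1, p)}

set_option linter.unusedSectionVars false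

section Helpers
variable {m : ℕ} [NeZero m]

lemma sub_val (u v : ZMod m) (hv : v ≠ 0) :
    (u - v).val = if u.val < v.val then u.val + m - v.val else u.val - v.val := by
  rw [sub_eq_add_neg, ZMod.val_add, ZMod.neg_val, if_neg hv]
  have h1 : u.val < m := ZMod.val_lt u
  have h2 : v.val < m := ZMod.val_lt v
  have h3 : v.val ≠ 0 := fun h => hv ((ZMod.val_eq_zero v).mp h)
  rcases lt_or_ge u.val v.val with h | h
  · rw [if_pos h, Nat.mod_eq_of_lt (by omega)]; omega
  · rw [if_neg (by omega)]
    have : u.val + (m - v.val) = (u.val - v.val) + m := by omega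
    rw [this, Nat.add_mod_right, Nat.mod_eq_of_lt (by omega)]

lemma val_sub_pos (u v : ZMod m) (h : u ≠ v) : 0 < (u - v).val := by
  have h2 : u - v ≠ 0 := sub_ne_zero.mpr h
  have := (ZMod.val_eq_zero (u - v)).not.mpr h2
  omega

lemma val_sub_ne (u v w : ZMod m) (h : u ≠ v) : (u - w).val ≠ (v - w).val := by
  intro hh
  exact h (by have := ZMod.val_injective m hh; exact sub_left_injective this)

/-- the key translation: (x - b).val in terms of (x-a).val, (b-a).val -/
lemma sub_val_rebase (x a b : ZMod m) (hba : b ≠ a) :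
    (x - b).val = if (x - a).val < (b - a).val then (x - a).val + m - (b - a).val
      else (x - a).val - (b - a).val := by
  have : x - b = (x - a) - (b - a) := by ring
  rw [this, sub_val _ _ (sub_ne_zero.mpr hba)]

lemma inArc_compl {a b x : ZMod m} (hab : a ≠ b) (hxa : x ≠ a) (hxb : x ≠ b) :
    InArc a b x ↔ ¬ InArc b a x := by
  have hB : 0 < (b - a).val := val_sub_pos b a (Ne.symm hab)
  have hT : 0 < (x - a).val := val_sub_pos x a hxa
  have hTB : (x - a).val ≠ (b - a).val := val_sub_ne x b a hxb
  have h1 := sub_val_rebase x a b (Ne.symm hab)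
  have h2 : (a - b).val = m - (b - a).val := by
    have : a - b = -(b-a) := by ring
    rw [this, ZMod.neg_val, if_neg (sub_ne_zero.mpr (Ne.symm hab))]
  have h3 : (x - a).val < m := ZMod.val_lt _
  have h4 : (b - a).val < m := ZMod.val_lt _
  unfold InArc
  rw [h1, h2]
  split_ifs <;> omega
end Helpers

section Cross
variable {m : ℕ} [NeZero m]

lemma xor_congr' {P Q P' Q' : Prop} (h1 : P ↔ P') (h2 : Q ↔ Q') :
    Xor' P Q ↔ Xor' P' Q' := by unfold Xor' Xor; tauto

lemma xor_arc_swap {a b c d : ZMod m} (hab : a ≠ b) (hca : c ≠ a) (hcb : c ≠ b)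
    (hda : d ≠ a) (hdb : d ≠ b) :
    Xor' (InArc b a c) (InArc b a d) ↔ Xor' (InArc a b c) (InArc a b d) := by
  rw [inArc_compl hab.symm hcb hca, inArc_compl hab.symm hdb hda]
  unfold Xor' Xor; tauto

lemma crosses_iff {a b c d : ZMod m} (hab : a ≠ b) (hcd : c ≠ d)
    (hca : c ≠ a) (hcb : c ≠ b) (hda : d ≠ a) (hdb : d ≠ b) :
    Chord.Crosses s(a,b) s(c,d) ↔ Xor' (InArc a b c) (InArc a b d) := by
  constructor
  · rintro ⟨a', b', c', d', he, hf, h⟩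
    rw [Sym2.eq_iff] at he hf
    have comm : ∀ P Q : Prop, Xor' P Q ↔ Xor' Q P := fun P Q => by unfold Xor' Xor; tauto
    rcases he with ⟨rfl, rfl⟩ | ⟨rfl, rfl⟩ <;> rcases hf with ⟨rfl, rfl⟩ | ⟨rfl, rfl⟩
    · exact h
    · exact (comm _ _).mp h
    · exact (xor_arc_swap hab hca hcb hda hdb).mp h
    · exact (xor_arc_swap hab hca hcb hda hdb).mp ((comm _ _).mp h)
  · intro h; exact ⟨a, b, c, d, rfl, rfl, h⟩

lemma crosses_comm {a b c d : ZMod m} (hab : a ≠ b) (hcd : c ≠ d)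
    (hca : c ≠ a) (hcb : c ≠ b) (hda : d ≠ a) (hdb : d ≠ b) :
    Chord.Crosses s(a,b) s(c,d) ↔ Chord.Crosses s(c,d) s(a,b) := by
  rw [crosses_iff hab hcd hca hcb hda hdb,
      crosses_iff hcd hab (Ne.symm hca) (Ne.symm hda) (Ne.symm hcb) (Ne.symm hdb)]
  have hB : 0 < (b - a).val := val_sub_pos b a hab.symm
  have hC : 0 < (c - a).val := val_sub_pos c a hca
  have hD : 0 < (d - a).val := val_sub_pos d a hda
  have hBC : (b - a).val ≠ (c - a).val := val_sub_ne b c a (Ne.symm hcb)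
  have hBD : (b - a).val ≠ (d - a).val := val_sub_ne b d a (Ne.symm hdb)
  have hCD : (c - a).val ≠ (d - a).val := val_sub_ne c d a hcd
  have hac : (a - c).val = m - (c - a).val := by
    have h : a - c = -(c-a) := by ring
    rw [h, ZMod.neg_val, if_neg (sub_ne_zero.mpr hca)]
  have hdc := sub_val_rebase d a c hca
  have hbc := sub_val_rebase b a c hca
  have hBm : (b - a).val < m := ZMod.val_lt _
  have hCm : (c - a).val < m := ZMod.val_lt _
  have hDm : (d - a).val < m := ZMod.val_lt _
  unfold Xor' Xor InArc
  rw [hac, hdc, hbc]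
  split_ifs <;> omega
end Cross


lemma not_crosses_self {m : ℕ} [NeZero m] (e : Chord m) : ¬ Chord.Crosses e e := by
  rintro ⟨a, b, c, d, he, hf, h⟩
  rw [he, Sym2.eq_iff] at hf
  have h1 : ¬ InArc a b a := by simp [InArc]
  have h2 : ¬ InArc a b b := by
    intro ⟨_, hh⟩; exact absurd hh (lt_irrefl _)
  rcases hf with ⟨rfl, rfl⟩ | ⟨rfl, rfl⟩ <;> unfold Xor' Xor at h <;> tauto

section Setup
variable {m : ℕ} [NeZero m] (hm : 4 ≤ m) (i j : ZMod m)
  (hord : CyclicOrd4 i (i+1) j (j+1))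

lemma val_one_eq (hm : 4 ≤ m) : (1 : ZMod m).val = 1 := by
  rw [ZMod.val_one_eq_one_mod, Nat.mod_eq_of_lt (by omega)]

lemma add_one_sub_self (x : ZMod m) : x + 1 - x = 1 := by ring

include hm hord

lemma Jfacts : 1 < (j - i).val ∧ (j + 1 - i).val = (j - i).val + 1 ∧ (j - i).val + 1 < m := by
  obtain ⟨h1, h2, h3⟩ := hord
  rw [add_one_sub_self] at h2
  rw [val_one_eq hm] at h2
  have he : j + 1 - i = (j - i) + 1 := by ring
  have hv : (j + 1 - i).val = ((j - i).val + 1) % m := by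
    rw [he, ZMod.val_add, val_one_eq hm]
  have hJm : (j - i).val < m := ZMod.val_lt _
  rcases Nat.lt_or_ge ((j - i).val + 1) m with h | h
  · rw [Nat.mod_eq_of_lt h] at hv
    exact ⟨h2, hv, h⟩
  · have : (j - i).val + 1 = m := by omega
    rw [this, Nat.mod_self] at hv
    rw [hv] at h3; omega

lemma distinct4 : i ≠ i + 1 ∧ i ≠ j ∧ i ≠ j + 1 ∧ i + 1 ≠ j ∧ i + 1 ≠ j + 1 ∧ j ≠ j + 1 := by
  obtain ⟨hJ, hJ1, hJm⟩ := Jfacts hm i j hord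
  have h1 : (1 : ZMod m) ≠ 0 := by
    intro h; have := val_one_eq (m := m) hm; rw [h] at this; simp at this
  have hii : i ≠ i + 1 := by intro h; exact h1 (by linear_combination -h)
  have hij : i ≠ j := by
    intro h; rw [← h, sub_self] at hJ; simp at hJ
  have hij1 : i ≠ j + 1 := by
    intro h; rw [← h, sub_self] at hJ1; simp at hJ1
  have hi1j : i + 1 ≠ j := by
    intro h
    have : j - i = 1 := by rw [← h]; ring
    rw [this, val_one_eq hm] at hJ; omega
  have hi1j1 : i + 1 ≠ j + 1 := fun h => hij (by linear_combination h)
  have hjj : j ≠ j + 1 := by intro h; exact h1 (by linear_combination -h)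
  exact ⟨hii, hij, hij1, hi1j, hi1j1, hjj⟩

/-- the two arcs agree off the four special points -/
lemma arc_equiv (x : ZMod m) (h0 : x ≠ i) (h1 : x ≠ i + 1) (h2 : x ≠ j) (h3 : x ≠ j + 1) :
    InArc i (j + 1) x ↔ InArc (i + 1) j x := by
  obtain ⟨hJ, hJ1, hJm⟩ := Jfacts hm i j hord
  obtain ⟨hii, hij, hij1, hi1j, hi1j1, hjj⟩ := distinct4 hm i j hord
  have hx0 : 0 < (x - i).val := val_sub_pos x i h0
  have hx1 : (x - i).val ≠ 1 := by
    intro h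
    apply h1
    have : (x - i).val = (i + 1 - i).val := by rw [add_one_sub_self, val_one_eq hm, h]
    have := ZMod.val_injective m this
    exact sub_left_injective this
  have hxJ : (x - i).val ≠ (j - i).val := val_sub_ne x j i h2
  have hxJ1 : (x - i).val ≠ (j + 1 - i).val := val_sub_ne x (j+1) i h3
  have hxm : (x - i).val < m := ZMod.val_lt _
  have e1 : x - (i + 1) = (x - i) - 1 := by ring
  have e2 : j - (i + 1) = (j - i) - 1 := by ring
  have h1ne : (1 : ZMod m) ≠ 0 := by
    intro h; have := val_one_eq (m := m) hm; rw [h] at this; simp at this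
  have v1 : (x - (i+1)).val = (x - i).val - 1 := by
    rw [e1, sub_val _ _ h1ne, val_one_eq hm, if_neg (by omega)]
  have v2 : (j - (i+1)).val = (j - i).val - 1 := by
    rw [e2, sub_val _ _ h1ne, val_one_eq hm, if_neg (by omega)]
  unfold InArc
  rw [v1, v2, hJ1]
  omega

lemma cross_alpha_iff_beta (c d : ZMod m) (hcd : c ≠ d)
    (hc0 : c ≠ i) (hc1 : c ≠ i + 1) (hc2 : c ≠ j) (hc3 : c ≠ j + 1)
    (hd0 : d ≠ i) (hd1 : d ≠ i + 1) (hd2 : d ≠ j) (hd3 : d ≠ j + 1) :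
    Chord.Crosses s(c,d) s(i, j+1) ↔ Chord.Crosses s(c,d) s(i+1, j) := by
  obtain ⟨hii, hij, hij1, hi1j, hi1j1, hjj⟩ := distinct4 hm i j hord
  rw [crosses_comm hcd hij1 hc0.symm hd0.symm hc3.symm hd3.symm,
      crosses_comm hcd hi1j hc1.symm hd1.symm hc2.symm hd2.symm,
      crosses_iff hij1 hcd hc0 hc3 hd0 hd3,
      crosses_iff hi1j hcd hc1 hc2 hd1 hd2]
  exact xor_congr' (arc_equiv hm i j hord c hc0 hc1 hc2 hc3)
    (arc_equiv hm i j hord d hd0 hd1 hd2 hd3)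

lemma alpha_beta_not_cross :
    ¬ Chord.Crosses s(i, j+1) s(i+1, j) ∧ ¬ Chord.Crosses s(i+1, j) s(i, j+1) := by
  obtain ⟨hJ, hJ1, hJm⟩ := Jfacts hm i j hord
  obtain ⟨hii, hij, hij1, hi1j, hi1j1, hjj⟩ := distinct4 hm i j hord
  have key : ¬ Chord.Crosses s(i, j+1) s(i+1, j) := by
    rw [crosses_iff hij1 hi1j hii.symm hi1j1 hij.symm hjj]
    have a1 : InArc i (j+1) (i+1) := by
      unfold InArc; rw [add_one_sub_self, val_one_eq hm, hJ1]; omega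
    have a2 : InArc i (j+1) j := by
      unfold InArc; rw [hJ1]; omega
    unfold Xor' Xor; tauto
  exact ⟨key, fun h => key ((crosses_comm hi1j hij1 hii hij hi1j1.symm hjj.symm).mp h)⟩
end Setup


section DiagramFacts
variable {n : ℕ} (D : ChordDiagram n)

lemma chord_canonical {e : Chord (2*n)} (he : e ∈ D.chords) {x : ZMod (2*n)} (hx : x ∈ e) :
    e = s(x, D.inv x) := by
  obtain ⟨y, rfl⟩ := he
  rw [Sym2.mem_iff] at hx
  rcases hx with rfl | rfl
  · rfl
  · rw [D.involutive y, Sym2.eq_swap]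

lemma chord_eq_of_shared {e f : Chord (2*n)} (he : e ∈ D.chords) (hf : f ∈ D.chords)
    {x : ZMod (2*n)} (hxe : x ∈ e) (hxf : x ∈ f) : e = f := by
  rw [chord_canonical D he hxe, chord_canonical D hf hxf]

lemma chord_repr {e : Chord (2*n)} (he : e ∈ D.chords) :
    ∃ x y, e = s(x, y) ∧ x ≠ y := by
  obtain ⟨x, rfl⟩ := he
  exact ⟨x, D.inv x, rfl, (D.fixedPointFree x).symm⟩

/-- distinct chords of a diagram have four pairwise distinct endpoints -/
lemma chord_disjoint_repr {e f : Chord (2*n)} (he : e ∈ D.chords) (hf : f ∈ D.chords)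
    (hef : e ≠ f) : ∃ a b c d, e = s(a,b) ∧ f = s(c,d) ∧ a ≠ b ∧ c ≠ d ∧
      c ≠ a ∧ c ≠ b ∧ d ≠ a ∧ d ≠ b := by
  obtain ⟨a, b, rfl, hab⟩ := chord_repr D he
  obtain ⟨c, d, rfl, hcd⟩ := chord_repr D hf
  refine ⟨a, b, c, d, rfl, rfl, hab, hcd, ?_, ?_, ?_, ?_⟩ <;>
    rintro rfl <;> apply hef <;>
    [exact (chord_eq_of_shared D he hf (Sym2.mem_mk_left _ _) (Sym2.mem_mk_left _ _));
     exact (chord_eq_of_shared D he hf (Sym2.mem_mk_right _ _) (Sym2.mem_mk_left _ _));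
     exact (chord_eq_of_shared D he hf (Sym2.mem_mk_left _ _) (Sym2.mem_mk_right _ _));
     exact (chord_eq_of_shared D he hf (Sym2.mem_mk_right _ _) (Sym2.mem_mk_right _ _))]

lemma crosses_comm_chords [NeZero (2*n)] {e f : Chord (2*n)} (he : e ∈ D.chords)
    (hf : f ∈ D.chords) : Chord.Crosses e f ↔ Chord.Crosses f e := by
  by_cases hef : e = f
  · subst hef; rfl
  · obtain ⟨a, b, c, d, rfl, rfl, hab, hcd, hca, hcb, hda, hdb⟩ :=
      chord_disjoint_repr D he hf hef
    exact crosses_comm hab hcd hca hcb hda hdb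

end DiagramFacts

/-- replacing a chord `A` of an H-triple by a crossing-equivalent chord `B`
gives an H-triple -/
lemma replace_HTriple {n : ℕ} (D : ChordDiagram n) (A B : Chord (2*n)) (hB : B ∈ D.chords)
    (hiffL : ∀ e ∈ D.chords, e ≠ A → e ≠ B → (Chord.Crosses A e ↔ Chord.Crosses B e))
    (hiffR : ∀ e ∈ D.chords, e ≠ A → e ≠ B → (Chord.Crosses e A ↔ Chord.Crosses e B))
    (P : Finset (Chord (2*n))) (hP : D.IsHTriple P) (hA : A ∈ P) (hBP : B ∉ P) :
    D.IsHTriple (insert B (P.erase A)) := by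
  obtain ⟨hcard, hmem, c, hcP, hcross, hnc⟩ := hP
  have hBne : B ∉ P.erase A := fun h => hBP (Finset.mem_of_mem_erase h)
  have hmem' : ∀ x, x ∈ insert B (P.erase A) ↔ x = B ∨ (x ∈ P ∧ x ≠ A) := by
    intro x
    simp only [Finset.mem_insert, Finset.mem_erase]
    tauto
  have hne : ∀ x ∈ P, x ≠ A → x ≠ B := fun x hx _ hxB => hBP (hxB ▸ hx)
  refine ⟨?_, ?_, ?_⟩
  · rw [Finset.card_insert_of_notMem hBne, Finset.card_erase_of_mem hA, hcard]
  · intro e he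
    rcases (hmem' e).mp he with rfl | ⟨heP, _⟩
    · exact hB
    · exact hmem e heP
  · by_cases hcA : c = A
    · subst hcA
      refine ⟨B, (hmem' B).mpr (Or.inl rfl), ?_, ?_⟩
      · intro e he heB
        rcases (hmem' e).mp he with rfl | ⟨heP, heA⟩
        · exact absurd rfl heB
        · exact (hiffL e (hmem e heP) heA (hne e heP heA)).mp (hcross e heP heA)
      · intro a ha b hb haB hbB hab
        rcases (hmem' a).mp ha with rfl | ⟨haP, haA⟩
        · exact absurd rfl haB
        rcases (hmem' b).mp hb with rfl | ⟨hbP, hbA⟩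
        · exact absurd rfl hbB
        exact hnc a haP b hbP haA hbA hab
    · refine ⟨c, (hmem' c).mpr (Or.inr ⟨hcP, hcA⟩), ?_, ?_⟩
      · intro e he hec
        rcases (hmem' e).mp he with rfl | ⟨heP, heA⟩
        · exact (hiffR c (hmem c hcP) hcA (hne c hcP hcA)).mp
            (hcross A hA (Ne.symm hcA))
        · exact hcross e heP hec
      · intro a ha b hb hac hbc hab
        have hAc : A ≠ c := Ne.symm hcA
        rcases (hmem' a).mp ha with rfl | ⟨haP, haA⟩
        · rcases (hmem' b).mp hb with rfl | ⟨hbP, hbA⟩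
          · exact absurd rfl hab
          · intro hcr
            exact hnc A hA b hbP hAc hbc (fun h => hbA h.symm)
              ((hiffL b (hmem b hbP) hbA (hne b hbP hbA)).mpr hcr)
        · rcases (hmem' b).mp hb with rfl | ⟨hbP, hbA⟩
          · intro hcr
            exact hnc a haP A hA hac hAc haA
              ((hiffR a (hmem a haP) haA (hne a haP haA)).mpr hcr)
          · exact hnc a haP b hbP hac hbc hab

/-- H-triples avoiding the deleted chords are in bijection with H-triples of the
deletion -/
lemma deletion_HTriple_card {n n' : ℕ} (D : ChordDiagram n) (D' : ChordDiagram n')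
    (S : Set (Chord (2*n))) (hdel : D.DeletionOf S D') :
    Set.ncard {P | D.IsHTriple P ∧ ∀ e ∈ P, e ∉ S} = Set.ncard {Q | D'.IsHTriple Q} := by
  obtain ⟨φ, hφ⟩ := hdel
  classical
  set ψ : Chord (2*n) → Chord (2*n') :=
    fun e => if h : e ∈ D.chords ∧ e ∉ S then (φ ⟨e, h⟩).1 else s(0,0) with hψdef
  set χ : Chord (2*n') → Chord (2*n) :=
    fun g => if h : g ∈ D'.chords then (φ.symm ⟨g, h⟩).1 else s(0,0) with hχdef
  have hψ : ∀ (e : Chord (2*n)) (h : e ∈ D.chords ∧ e ∉ S), ψ e = (φ ⟨e, h⟩).1 :=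
    fun e h => dif_pos h
  have hψmem : ∀ (e : Chord (2*n)) (h : e ∈ D.chords ∧ e ∉ S), ψ e ∈ D'.chords := by
    intro e h; rw [hψ e h]; exact (φ ⟨e, h⟩).2
  have hχ : ∀ (g : Chord (2*n')) (h : g ∈ D'.chords), χ g = (φ.symm ⟨g, h⟩).1 :=
    fun g h => dif_pos h
  have hχgood : ∀ (g : Chord (2*n')) (h : g ∈ D'.chords), χ g ∈ D.chords ∧ χ g ∉ S := by
    intro g h; rw [hχ g h]; exact (φ.symm ⟨g, h⟩).2
  have hψχ : ∀ (g : Chord (2*n')) (hg : g ∈ D'.chords), ψ (χ g) = g := by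
    intro g hg
    rw [hψ _ (hχgood g hg)]
    have h1 : (⟨χ g, hχgood g hg⟩ : {e // e ∈ D.chords ∧ e ∉ S}) = φ.symm ⟨g, hg⟩ :=
      Subtype.ext (hχ g hg)
    rw [h1, Equiv.apply_symm_apply]
  have hχψ : ∀ (e : Chord (2*n)) (h : e ∈ D.chords ∧ e ∉ S), χ (ψ e) = e := by
    intro e h
    rw [hψ e h, hχ _ (φ ⟨e, h⟩).2]
    have h1 : (⟨(φ ⟨e, h⟩).1, (φ ⟨e, h⟩).2⟩ : {g // g ∈ D'.chords}) = φ ⟨e, h⟩ :=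
      Subtype.ext rfl
    rw [h1, Equiv.symm_apply_apply]
  have hψinj : ∀ e f (he : e ∈ D.chords ∧ e ∉ S) (hf : f ∈ D.chords ∧ f ∉ S),
      ψ e = ψ f → e = f := by
    intro e f he hf h
    rw [← hχψ e he, h, hχψ f hf]
  have hcrossψ : ∀ e f (he : e ∈ D.chords ∧ e ∉ S) (hf : f ∈ D.chords ∧ f ∉ S),
      Chord.Crosses e f ↔ Chord.Crosses (ψ e) (ψ f) := by
    intro e f he hf
    rw [hψ e he, hψ f hf]
    exact hφ ⟨e, he⟩ ⟨f, hf⟩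
  have hgoodP : ∀ P : Finset (Chord (2*n)), D.IsHTriple P → (∀ e ∈ P, e ∉ S) →
      ∀ e ∈ P, e ∈ D.chords ∧ e ∉ S :=
    fun P hP hPS e he => ⟨hP.2.1 e he, hPS e he⟩
  -- the image is exactly the H-triples of D'
  have himg : {Q | D'.IsHTriple Q} =
      (fun P : Finset (Chord (2*n)) => P.image ψ) ''
        {P | D.IsHTriple P ∧ ∀ e ∈ P, e ∉ S} := by
    apply Set.eq_of_subset_of_subset
    · rintro Q hQ
      obtain ⟨hcard, hmem, c, hcQ, hcross, hnc⟩ := hQ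
      refine ⟨Q.image χ, ⟨⟨?_, ?_, ?_⟩, ?_⟩, ?_⟩
      · -- card
        rw [Finset.card_image_of_injOn, hcard]
        intro a ha b hb h
        rw [← hψχ a (hmem a ha), h, hψχ b (hmem b hb)]
      · -- members are chords
        intro e he
        obtain ⟨g, hg, rfl⟩ := Finset.mem_image.mp he
        exact (hχgood g (hmem g hg)).1
      · -- H structure
        refine ⟨χ c, Finset.mem_image_of_mem χ hcQ, ?_, ?_⟩
        · intro e he hec
          obtain ⟨g, hg, rfl⟩ := Finset.mem_image.mp he
          have hgc : g ≠ c := fun h => hec (h ▸ rfl)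
          have := hcross g hg hgc
          rw [hcrossψ _ _ (hχgood c (hmem c hcQ)) (hχgood g (hmem g hg)),
            hψχ c (hmem c hcQ), hψχ g (hmem g hg)]
          exact this
        · intro a ha b hb hac hbc hab
          obtain ⟨ga, hga, rfl⟩ := Finset.mem_image.mp ha
          obtain ⟨gb, hgb, rfl⟩ := Finset.mem_image.mp hb
          have h1 : ga ≠ c := fun h => hac (h ▸ rfl)
          have h2 : gb ≠ c := fun h => hbc (h ▸ rfl)
          have h3 : ga ≠ gb := fun h => hab (h ▸ rfl)
          have := hnc ga hga gb hgb h1 h2 h3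
          rw [hcrossψ _ _ (hχgood ga (hmem ga hga)) (hχgood gb (hmem gb hgb)),
            hψχ ga (hmem ga hga), hψχ gb (hmem gb hgb)]
          exact this
      · -- avoids S
        intro e he
        obtain ⟨g, hg, rfl⟩ := Finset.mem_image.mp he
        exact (hχgood g (hmem g hg)).2
      · -- image back equals Q
        ext g
        simp only [Finset.mem_image]
        constructor
        · rintro ⟨e, ⟨g', hg', rfl⟩, rfl⟩
          rw [hψχ g' (hmem g' hg')]
          exact hg'
        · intro hg
          exact ⟨χ g, ⟨g, hg, rfl⟩, hψχ g (hmem g hg)⟩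
    · rintro Q ⟨P, ⟨hP, hPS⟩, rfl⟩
      obtain ⟨hcard, hmem, c, hcP, hcross, hnc⟩ := hP
      have hg := hgoodP P ⟨hcard, hmem, c, hcP, hcross, hnc⟩ hPS
      refine ⟨?_, ?_, ?_⟩
      · rw [Finset.card_image_of_injOn, hcard]
        intro a ha b hb h
        exact hψinj a b (hg a ha) (hg b hb) h
      · intro e he
        obtain ⟨f, hf, rfl⟩ := Finset.mem_image.mp he
        exact hψmem f (hg f hf)
      · refine ⟨ψ c, Finset.mem_image_of_mem ψ hcP, ?_, ?_⟩
        · intro e he hec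
          obtain ⟨f, hf, rfl⟩ := Finset.mem_image.mp he
          have hfc : f ≠ c := fun h => hec (h ▸ rfl)
          exact (hcrossψ c f (hg c hcP) (hg f hf)).mp (hcross f hf hfc)
        · intro a ha b hb hac hbc hab
          obtain ⟨fa, hfa, rfl⟩ := Finset.mem_image.mp ha
          obtain ⟨fb, hfb, rfl⟩ := Finset.mem_image.mp hb
          have h1 : fa ≠ c := fun h => hac (h ▸ rfl)
          have h2 : fb ≠ c := fun h => hbc (h ▸ rfl)
          have h3 : fa ≠ fb := fun h => hab (h ▸ rfl)
          exact fun hcr => hnc fa hfa fb hfb h1 h2 h3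
            ((hcrossψ fa fb (hg fa hfa) (hg fb hfb)).mpr hcr)
  rw [himg]
  refine (Set.ncard_image_of_injOn ?_).symm
  intro P1 h1 P2 h2 h
  have h' : P1.image ψ = P2.image ψ := h
  have hg1 := hgoodP P1 h1.1 h1.2
  have hg2 := hgoodP P2 h2.1 h2.2
  ext x
  constructor
  · intro hx
    have hx2 : ψ x ∈ P2.image ψ := h' ▸ Finset.mem_image_of_mem ψ hx
    obtain ⟨y, hy, hyx⟩ := Finset.mem_image.mp hx2
    rwa [← hψinj y x (hg2 y hy) (hg1 x hx) hyx]
  · intro hx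
    have hx2 : ψ x ∈ P1.image ψ := h'.symm ▸ Finset.mem_image_of_mem ψ hx
    obtain ⟨y, hy, hyx⟩ := Finset.mem_image.mp hx2
    rwa [← hψinj y x (hg1 y hy) (hg2 x hx) hyx]


/-- deleting a strong RII pair `α = {i, j+1}`, `β = {i+1, j}` changes the
H-chord count by `k` modulo 2, where `k` is the number of chords of `D` crossing `α`;
in particular if `D` is evenly interlaced then `H(D) ≡ H(D') (mod 2)`. -/
theorem strong_RII_changes_H_by_even (n : ℕ) (D : ChordDiagram (n + 2)) (D' : ChordDiagram n)
    (i j : ZMod (2 * (n + 2)))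
    (hord : CyclicOrd4 i (i + 1) j (j + 1))
    (hα : s(i, j + 1) ∈ D.chords) (hβ : s(i + 1, j) ∈ D.chords)
    (hdel : D.DeletionOf {s(i, j + 1), s(i + 1, j)} D')
    (k : ℕ) (hk : k = Set.ncard {e | e ∈ D.chords ∧ Chord.Crosses e s(i, j + 1)}) :
    D.H ≡ D'.H + k [MOD 2] ∧
      (D.EvenlyInterlaced → D.H ≡ D'.H [MOD 2]) := by
  classical
  haveI : NeZero (2 * (n + 2)) := ⟨by omega⟩
  have hm : 4 ≤ 2 * (n + 2) := by omega
  set A : Chord (2 * (n + 2)) := s(i, j + 1) with hAdef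
  set B : Chord (2 * (n + 2)) := s(i + 1, j) with hBdef
  obtain ⟨hii, hij, hij1, hi1j, hi1j1, hjj⟩ := distinct4 hm i j hord
  have hABne : A ≠ B := by
    intro h
    rw [hAdef, hBdef] at h
    rcases Sym2.eq_iff.mp h with ⟨h1, _⟩ | ⟨h1, _⟩
    · exact hii h1
    · exact hij h1
  have hnAB : ¬ Chord.Crosses A B := (alpha_beta_not_cross hm i j hord).1
  have hnBA : ¬ Chord.Crosses B A := (alpha_beta_not_cross hm i j hord).2
  have hnAA : ¬ Chord.Crosses A A := not_crosses_self A
  -- crossing equivalence for all other chords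
  have hiffR : ∀ e ∈ D.chords, e ≠ A → e ≠ B →
      (Chord.Crosses e A ↔ Chord.Crosses e B) := by
    intro e he heA heB
    obtain ⟨c, d, rfl, hcd⟩ := chord_repr D he
    have key : ∀ x : ZMod (2 * (n + 2)), x ∈ (s(c,d) : Chord (2 * (n + 2))) →
        x ≠ i ∧ x ≠ i + 1 ∧ x ≠ j ∧ x ≠ j + 1 := by
      intro x hx
      refine ⟨?_, ?_, ?_, ?_⟩ <;> rintro rfl
      · exact heA (chord_eq_of_shared D he hα hx (Sym2.mem_mk_left _ _))
      · exact heB (chord_eq_of_shared D he hβ hx (Sym2.mem_mk_left _ _))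
      · exact heB (chord_eq_of_shared D he hβ hx (Sym2.mem_mk_right _ _))
      · exact heA (chord_eq_of_shared D he hα hx (Sym2.mem_mk_right _ _))
    obtain ⟨hc0, hc1, hc2, hc3⟩ := key c (Sym2.mem_mk_left _ _)
    obtain ⟨hd0, hd1, hd2, hd3⟩ := key d (Sym2.mem_mk_right _ _)
    exact cross_alpha_iff_beta hm i j hord c d hcd hc0 hc1 hc2 hc3 hd0 hd1 hd2 hd3
  have hiffL : ∀ e ∈ D.chords, e ≠ A → e ≠ B →
      (Chord.Crosses A e ↔ Chord.Crosses B e) := by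
    intro e he heA heB
    rw [crosses_comm_chords D hα he, crosses_comm_chords D hβ he]
    exact hiffR e he heA heB
  -- the four classes of H-triples
  set T0 : Set (Finset (Chord (2 * (n + 2)))) :=
    {P | D.IsHTriple P ∧ ∀ e ∈ P, e ∉ ({A, B} : Set (Chord (2 * (n + 2))))} with hT0def
  set S1a : Set (Finset (Chord (2 * (n + 2)))) :=
    {P | D.IsHTriple P ∧ A ∈ P ∧ B ∉ P} with hS1adef
  set S1b : Set (Finset (Chord (2 * (n + 2)))) :=
    {P | D.IsHTriple P ∧ A ∉ P ∧ B ∈ P} with hS1bdef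
  set S2 : Set (Finset (Chord (2 * (n + 2)))) :=
    {P | D.IsHTriple P ∧ A ∈ P ∧ B ∈ P} with hS2def
  -- split the count
  have hsplit : D.H = T0.ncard + S1a.ncard + S1b.ncard + S2.ncard := by
    have hu : {P | D.IsHTriple P} = (T0 ∪ S1a) ∪ (S1b ∪ S2) := by
      ext P
      simp only [hT0def, hS1adef, hS1bdef, hS2def, Set.mem_setOf_eq, Set.mem_union]
      constructor
      · intro hP
        rcases em (A ∈ P) with hA | hA <;> rcases em (B ∈ P) with hB | hB
        · exact Or.inr (Or.inr ⟨hP, hA, hB⟩)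
        · exact Or.inl (Or.inr ⟨hP, hA, hB⟩)
        · exact Or.inr (Or.inl ⟨hP, hA, hB⟩)
        · refine Or.inl (Or.inl ⟨hP, fun e he hmem => ?_⟩)
          rcases hmem with rfl | hmem
          · exact hA he
          · rw [Set.mem_singleton_iff] at hmem
            subst hmem
            exact hB he
      · rintro ((⟨h, -⟩ | ⟨h, -, -⟩) | (⟨h, -, -⟩ | ⟨h, -, -⟩)) <;> exact h
    have d1 : Disjoint (T0 ∪ S1a) (S1b ∪ S2) := by
      rw [Set.disjoint_left]
      rintro P (hP | hP) (hQ | hQ)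
      · exact (hP.2 B hQ.2.2) (Or.inr rfl)
      · exact (hP.2 A hQ.2.1) (Or.inl rfl)
      · exact hQ.2.1 hP.2.1
      · exact hP.2.2 hQ.2.2
    have d2 : Disjoint T0 S1a := by
      rw [Set.disjoint_left]
      rintro P hP hQ
      exact (hP.2 A hQ.2.1) (Or.inl rfl)
    have d3 : Disjoint S1b S2 := by
      rw [Set.disjoint_left]
      rintro P hP hQ
      exact hP.2.1 hQ.2.1
    show Set.ncard {P | D.IsHTriple P} = _
    rw [hu, Set.ncard_union_eq d1 (Set.toFinite _) (Set.toFinite _),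
      Set.ncard_union_eq d2 (Set.toFinite _) (Set.toFinite _),
      Set.ncard_union_eq d3 (Set.toFinite _) (Set.toFinite _)]
    ring
  -- T0 counts H-triples of D'
  have hT0 : T0.ncard = D'.H :=
    deletion_HTriple_card D D' {A, B} hdel
  -- S1a and S1b have equal size
  have h1ab : S1a.ncard = S1b.ncard := by
    have himg : S1b = (fun P => insert B (P.erase A)) '' S1a := by
      apply Set.eq_of_subset_of_subset
      · rintro Q ⟨hQ, hAQ, hBQ⟩
        refine ⟨insert A (Q.erase B), ⟨?_, ?_, ?_⟩, ?_⟩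
        · exact replace_HTriple D B A hα
            (fun e he h1 h2 => (hiffL e he h2 h1).symm)
            (fun e he h1 h2 => (hiffR e he h2 h1).symm) Q hQ hBQ hAQ
        · exact Finset.mem_insert_self _ _
        · intro h
          rcases Finset.mem_insert.mp h with h | h
          · exact hABne h.symm
          · exact (Finset.mem_erase.mp h).1 rfl
        · show insert B ((insert A (Q.erase B)).erase A) = Q
          rw [Finset.erase_insert (fun h => hAQ (Finset.mem_of_mem_erase h)),
            Finset.insert_erase hBQ]
      · rintro Q ⟨P, ⟨hP, hAP, hBP⟩, rfl⟩
        refine ⟨replace_HTriple D A B hβ hiffL hiffR P hP hAP hBP, ?_, ?_⟩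
        · intro h
          rcases Finset.mem_insert.mp h with h | h
          · exact hABne h
          · exact (Finset.mem_erase.mp h).1 rfl
        · exact Finset.mem_insert_self _ _
    rw [himg]
    refine (Set.ncard_image_of_injOn ?_).symm
    rintro P1 ⟨_, hA1, hB1⟩ P2 ⟨_, hA2, hB2⟩ h
    have h' : insert B (P1.erase A) = insert B (P2.erase A) := h
    have e1 : P1.erase A = P2.erase A := by
      rw [← Finset.erase_insert (fun hh => hB1 (Finset.mem_of_mem_erase hh)), h',
        Finset.erase_insert (fun hh => hB2 (Finset.mem_of_mem_erase hh))]
    rw [← Finset.insert_erase hA1, e1, Finset.insert_erase hA2]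
  -- S2 counts chords crossing α
  have h2 : S2.ncard = k := by
    have hset : {e | e ∈ D.chords ∧ Chord.Crosses e A} =
        {e | e ∈ D.chords ∧ e ≠ A ∧ e ≠ B ∧ Chord.Crosses e A} := by
      ext e
      simp only [Set.mem_setOf_eq]
      constructor
      · rintro ⟨he, hcr⟩
        refine ⟨he, ?_, ?_, hcr⟩ <;> rintro rfl
        · exact hnAA hcr
        · exact hnBA hcr
      · rintro ⟨he, _, _, hcr⟩; exact ⟨he, hcr⟩
    have himg : S2 = (fun e => insert A (insert B {e})) ''
        {e | e ∈ D.chords ∧ e ≠ A ∧ e ≠ B ∧ Chord.Crosses e A} := by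
      apply Set.eq_of_subset_of_subset
      · rintro P ⟨⟨hcard, hmem, c, hcP, hcross, hnc⟩, hAP, hBP⟩
        have hBA : B ∈ P.erase A := Finset.mem_erase.mpr ⟨hABne.symm, hBP⟩
        have hc1 : ((P.erase A).erase B).card = 1 := by
          rw [Finset.card_erase_of_mem hBA, Finset.card_erase_of_mem hAP, hcard]
        obtain ⟨e, he⟩ := Finset.card_eq_one.mp hc1
        have heP : e ∈ P ∧ e ≠ A ∧ e ≠ B := by
          have : e ∈ (P.erase A).erase B := he ▸ Finset.mem_singleton_self e
          have h1 := Finset.mem_erase.mp this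
          have h2 := Finset.mem_erase.mp h1.2
          exact ⟨h2.2, h2.1, h1.1⟩
        have hPeq : P = insert A (insert B {e}) := by
          ext x
          simp only [Finset.mem_insert, Finset.mem_singleton]
          constructor
          · intro hx
            by_cases h1 : x = A
            · exact Or.inl h1
            by_cases h2 : x = B
            · exact Or.inr (Or.inl h2)
            have : x ∈ (P.erase A).erase B :=
              Finset.mem_erase.mpr ⟨h2, Finset.mem_erase.mpr ⟨h1, hx⟩⟩
            rw [he, Finset.mem_singleton] at this
            exact Or.inr (Or.inr this)
          · rintro (rfl | rfl | rfl)
            · exact hAP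
            · exact hBP
            · exact heP.1
        refine ⟨e, ⟨hmem e heP.1, heP.2.1, heP.2.2, ?_⟩, hPeq.symm⟩
        -- the center must be e
        have hcm : c = A ∨ c = B ∨ c = e := by
          have hc' := hPeq ▸ hcP
          simpa [Finset.mem_insert, Finset.mem_singleton] using hc'
        rcases hcm with rfl | rfl | rfl
        · exact absurd (hcross B hBP hABne.symm) hnAB
        · exact absurd (hcross A hAP hABne) hnBA
        · exact hcross A hAP (Ne.symm heP.2.1)
      · rintro Q ⟨e, ⟨he, heA, heB, hcr⟩, rfl⟩
        have hBe : B ∉ ({e} : Finset _) := by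
          rw [Finset.mem_singleton]; exact fun h => heB h.symm
        have hABe : A ∉ insert B ({e} : Finset _) := by
          rw [Finset.mem_insert, Finset.mem_singleton]
          push_neg
          exact ⟨hABne, fun h => heA h.symm⟩
        have hmem' : ∀ x, x ∈ insert A (insert B ({e} : Finset _)) ↔
            x = A ∨ x = B ∨ x = e := by
          intro x
          simp [Finset.mem_insert, Finset.mem_singleton]
        refine ⟨⟨?_, ?_, ?_⟩, ?_, ?_⟩
        · rw [Finset.card_insert_of_notMem hABe, Finset.card_insert_of_notMem hBe,
            Finset.card_singleton]
        · intro f hf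
          rcases (hmem' f).mp hf with rfl | rfl | rfl
          · exact hα
          · exact hβ
          · exact he
        · refine ⟨e, (hmem' e).mpr (Or.inr (Or.inr rfl)), ?_, ?_⟩
          · intro f hf hfe
            rcases (hmem' f).mp hf with rfl | rfl | rfl
            · exact hcr
            · exact (hiffR e he heA heB).mp hcr
            · exact absurd rfl hfe
          · intro a ha b hb hae hbe hab
            rcases (hmem' a).mp ha with rfl | rfl | rfl
            · rcases (hmem' b).mp hb with rfl | rfl | rfl
              · exact absurd rfl hab
              · exact hnAB
              · exact absurd rfl hbe
            · rcases (hmem' b).mp hb with rfl | rfl | rfl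
              · exact hnBA
              · exact absurd rfl hab
              · exact absurd rfl hbe
            · exact absurd rfl hae
        · exact (hmem' A).mpr (Or.inl rfl)
        · exact (hmem' B).mpr (Or.inr (Or.inl rfl))
    rw [himg, Set.ncard_image_of_injOn, ← hset, ← hk]
    rintro e1 ⟨_, h1A, h1B, _⟩ e2 _ h
    have h' : insert A (insert B ({e1} : Finset _)) = insert A (insert B {e2}) := h
    have : e1 ∈ insert A (insert B ({e2} : Finset _)) := by
      rw [← h']
      simp
    rcases Finset.mem_insert.mp this with h3 | h3
    · exact absurd h3 h1A
    rcases Finset.mem_insert.mp h3 with h4 | h4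
    · exact absurd h4 h1B
    · exact Finset.mem_singleton.mp h4
  -- conclude
  constructor
  · show D.H % 2 = (D'.H + k) % 2
    omega
  · intro hEI
    have heq : {f | f ∈ D.chords ∧ Chord.Crosses A f} =
        {e | e ∈ D.chords ∧ Chord.Crosses e A} := by
      ext f
      simp only [Set.mem_setOf_eq]
      exact and_congr_right fun hf => crosses_comm_chords D hα hf
    have hev : Even k := by
      rw [hk, ← heq]
      exact hEI A hα
    obtain ⟨t, ht⟩ := hev
    show D.H % 2 = D'.H % 2
    have h1 : D.H % 2 = (D'.H + k) % 2 := by omega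
    omega
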